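/- If (X, ⊳) is an RC-system (i.e., a set with a binary operation satisfying (x ⊳ y) ⊳ (x ⊳ z) = (y ⊳ x) ⊳ (y ⊳ z) for all x, y, z) and X is finite with the map (x, y) ↦ (x ⊳ y, y ⊳ x) injective on X², then the map Φ : X² → X² defined by Φ(x, y) = (x ⊳ x, x ⊳ y) is injective, provided also that for each x the left-translation y ↦ x ⊳ y is injective. -/
import Mathlib


/-- In a finite RC-system with injective `Ψ(x,y) = (x ⊳ y, y ⊳ x)` and injective
left-translations, the map `Φ(x,y) = (x ⊳ x, x ⊳ y)` is injective. -/
theorem stmt0 {X : Type*} [Finite X] (op : X → X → X)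
    (hRC : ∀ x y z : X, op (op x y) (op x z) = op (op y x) (op y z))
    (hΨ : Function.Injective (fun p : X × X => (op p.1 p.2, op p.2 p.1)))
    (hL : ∀ x : X, Function.Injective (op x)) :
    Function.Injective (fun p : X × X => (op p.1 p.1, op p.1 p.2)) := by
  have hsurjL : ∀ x : X, Function.Surjective (op x) :=
    fun x => Finite.surjective_of_injective (hL x)
  set S : Set X := Set.range (fun x => op x x) with hS
  -- S is stable under all left translations
  have hstab : ∀ v : X, ∀ s ∈ S, op v s ∈ S := by
    rintro v s ⟨y, rfl⟩
    obtain ⟨x, hx⟩ := hsurjL y v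
    exact ⟨op x y, by simp only; rw [hRC x y y, hx]⟩
  -- each left translation maps S onto S
  have hbij : ∀ v : X, Set.BijOn (op v) S S := by
    intro v
    have hfin : S.Finite := Set.toFinite S
    exact hfin.injOn_iff_bijOn_of_mapsTo (fun s hs => hstab v s hs)
      |>.mp ((hL v).injOn)
  -- the complement of S is stable too, so S = univ
  have hsq_surj : Function.Surjective (fun x : X => op x x) := by
    intro t
    by_contra hc
    have ht : t ∉ S := fun h => hc h
    have : op t t ∈ S := ⟨t, rfl⟩
    obtain ⟨s, hsS, hse⟩ := (hbij t).surjOn this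
    exact ht (hL t hse ▸ hsS)
  have hsq_inj : Function.Injective (fun x : X => op x x) :=
    Finite.injective_iff_surjective.mpr hsq_surj
  rintro ⟨a, y⟩ ⟨b, z⟩ h
  simp only [Prod.mk.injEq] at h
  obtain ⟨h1, h2⟩ := h
  have hab : a = b := hsq_inj h1
  subst hab
  exact Prod.ext rfl (hL a h2)
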